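/- For each i, let m*_i denote the transition density (off the diagonal) of the Metropolis–Hastings chain with symmetric Gaussian proposal q(x,y) = N(y; x, ηI) targeting p*_i(x) ∝ exp(−β_i f(x)), and let m̃_i denote the transition density of the Metropolis–Hastings chain with the same proposal targeting p̃_i(x) ∝ ∑_{j=1}^n w_j exp(−(β_i/2)(x−μ_j)ᵀΣ⁻¹(x−μ_j)). If w_min = min_{1≤j≤n} w_j > 0, then for all x ≠ y in ℝ^d, m̃_i(x,y) ≤ (1/w_min²) m*_i(x,y). -/

import Mathlib

open MeasureTheory Matrix

noncomputable section

/-- Quadratic form `v ↦ vᵀ Σ⁻¹ v`. -/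
def quadForm {d : ℕ} (Sig : Matrix (Fin d) (Fin d) ℝ) (v : Fin d → ℝ) : ℝ :=
  v ⬝ᵥ (Sig⁻¹ *ᵥ v)

/-- The Gaussian mixture potential `f`. -/
def mixPotential {d n : ℕ} (Sig : Matrix (Fin d) (Fin d) ℝ) (μ : Fin n → Fin d → ℝ)
    (w : Fin n → ℝ) (x : Fin d → ℝ) : ℝ :=
  -Real.log (∑ j, w j * Real.exp (-(1 / 2) * quadForm Sig (x - μ j)))

/-- Density of the symmetric Gaussian proposal `N(y; x, ηI)`. -/
def propDens (d : ℕ) (η : ℝ) (x y : Fin d → ℝ) : ℝ :=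
  (2 * Real.pi * η) ^ (-(d : ℝ) / 2) * Real.exp (-(∑ k, (y k - x k) ^ 2) / (2 * η))

set_option maxHeartbeats 800000 in
theorem stmt8 (d n : ℕ) (hn : 0 < n)
    (μ : Fin n → Fin d → ℝ)
    (Sig : Matrix (Fin d) (Fin d) ℝ) (hSig : Sig.PosDef)
    (w : Fin n → ℝ) (hw : ∀ j, 0 < w j) (hw1 : ∑ j, w j = 1)
    (η : ℝ) (hη : 0 < η)
    (β : ℝ) (hβ0 : 0 < β) (hβ1 : β ≤ 1)
    (Zs Zt : ℝ)
    (hZs : Zs = ∫ x, Real.exp (-β * mixPotential Sig μ w x)) (hZspos : 0 < Zs)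
    (hZt : Zt = ∫ x, ∑ j, w j * Real.exp (-(β / 2) * quadForm Sig (x - μ j)))
    (hZtpos : 0 < Zt)
    (pstar ptilde : (Fin d → ℝ) → ℝ)
    (hpstar : ∀ x, pstar x = Real.exp (-β * mixPotential Sig μ w x) / Zs)
    (hptilde : ∀ x, ptilde x = (∑ j, w j * Real.exp (-(β / 2) * quadForm Sig (x - μ j))) / Zt) :
    ∀ x y : Fin d → ℝ, x ≠ y →
      propDens d η x y * min 1 (ptilde y / ptilde x)
        ≤ (1 / (⨅ j, w j) ^ 2) * (propDens d η x y * min 1 (pstar y / pstar x)) := by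
  intro x y hxy
  -- abbreviations
  set S : (Fin d → ℝ) → ℝ := fun z => ∑ j, w j * Real.exp (-(1 / 2) * quadForm Sig (z - μ j))
    with hSdef
  set T : (Fin d → ℝ) → ℝ := fun z => ∑ j, w j * Real.exp (-(β / 2) * quadForm Sig (z - μ j))
    with hTdef
  have hQ : ∀ v : Fin d → ℝ, 0 ≤ quadForm Sig v := by
    intro v
    have := (hSig.inv.posSemidef).dotProduct_mulVec_nonneg v
    simpa [quadForm] using this
  have hexp_le_one : ∀ (c : ℝ), 0 < c → ∀ v, Real.exp (-(c) * quadForm Sig v) ≤ 1 := by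
    intro c hc v
    rw [Real.exp_le_one_iff]
    have := hQ v
    nlinarith
  haveI : Nonempty (Fin n) := ⟨⟨0, hn⟩⟩
  -- positivity of S and T
  have hSpos : ∀ z, 0 < S z := by
    intro z
    apply Finset.sum_pos (fun j _ => mul_pos (hw j) (Real.exp_pos _)) Finset.univ_nonempty
  have hTpos : ∀ z, 0 < T z := by
    intro z
    apply Finset.sum_pos (fun j _ => mul_pos (hw j) (Real.exp_pos _)) Finset.univ_nonempty
  -- wmin
  set c : ℝ := ⨅ j, w j with hc
  obtain ⟨j0, hj0⟩ : ∃ j0, c = w j0 := by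
    obtain ⟨i, hi⟩ := exists_eq_ciInf_of_finite (f := w)
    exact ⟨i, hi.symm⟩
  have hcpos : 0 < c := hj0 ▸ hw j0
  have hcle : ∀ j, c ≤ w j := fun j => ciInf_le (Set.Finite.bddBelow (Set.finite_range w)) j
  have hwle1 : ∀ j, w j ≤ 1 := by
    intro j
    rw [← hw1]
    exact Finset.single_le_sum (fun i _ => (hw i).le) (Finset.mem_univ j)
  have hc1 : c ≤ 1 := le_trans (hcle j0) (hwle1 j0)
  have hrpow' : ∀ v, Real.exp (-(β / 2) * quadForm Sig v)
      = Real.exp (-(1 / 2) * quadForm Sig v) ^ β := by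
    intro v
    rw [Real.rpow_def_of_pos (Real.exp_pos _), Real.log_exp]
    ring_nf
  -- upper bound : T z ≤ S z ^ β / c
  have hupper : ∀ z, T z ≤ S z ^ β / c := by
    intro z
    have hterm : ∀ j, w j * Real.exp (-(β / 2) * quadForm Sig (z - μ j))
        ≤ w j * (S z ^ β / c) := by
      intro j
      apply mul_le_mul_of_nonneg_left _ (hw j).le
      rw [hrpow']
      have ha : Real.exp (-(1 / 2) * quadForm Sig (z - μ j)) ≤ S z / c := by
        rw [le_div_iff₀ hcpos]
        calc Real.exp (-(1 / 2) * quadForm Sig (z - μ j)) * c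
            ≤ w j * Real.exp (-(1 / 2) * quadForm Sig (z - μ j)) := by
              rw [mul_comm]
              exact mul_le_mul_of_nonneg_right (hcle j) (Real.exp_pos _).le
          _ ≤ S z := Finset.single_le_sum
              (f := fun i => w i * Real.exp (-(1 / 2) * quadForm Sig (z - μ i)))
              (fun i _ => mul_nonneg (hw i).le (Real.exp_pos _).le) (Finset.mem_univ j)
      calc Real.exp (-(1 / 2) * quadForm Sig (z - μ j)) ^ β
          ≤ (S z / c) ^ β := Real.rpow_le_rpow (Real.exp_pos _).le ha hβ0.le
        _ = S z ^ β / c ^ β := Real.div_rpow (hSpos z).le hcpos.le β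
        _ ≤ S z ^ β / c := by
            apply div_le_div_of_nonneg_left (Real.rpow_nonneg (hSpos z).le β) hcpos
            calc c = c ^ (1 : ℝ) := (Real.rpow_one c).symm
              _ ≤ c ^ β := Real.rpow_le_rpow_of_exponent_ge hcpos hc1 hβ1
    calc T z ≤ ∑ j, w j * (S z ^ β / c) := Finset.sum_le_sum (fun j _ => hterm j)
      _ = S z ^ β / c := by rw [← Finset.sum_mul, hw1, one_mul]
  -- lower bound : c * S z ^ β ≤ T z
  have hlower : ∀ z, c * S z ^ β ≤ T z := by
    intro z
    obtain ⟨jm, _, hjm⟩ := Finset.exists_max_image Finset.univ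
      (fun j => Real.exp (-(1 / 2) * quadForm Sig (z - μ j))) Finset.univ_nonempty
    have hSle : S z ≤ Real.exp (-(1 / 2) * quadForm Sig (z - μ jm)) := by
      calc S z ≤ ∑ j, w j * Real.exp (-(1 / 2) * quadForm Sig (z - μ jm)) :=
            Finset.sum_le_sum (fun j _ =>
              mul_le_mul_of_nonneg_left (hjm j (Finset.mem_univ j)) (hw j).le)
        _ = Real.exp (-(1 / 2) * quadForm Sig (z - μ jm)) := by
            rw [← Finset.sum_mul, hw1, one_mul]
    calc c * S z ^ β
        ≤ w jm * Real.exp (-(1 / 2) * quadForm Sig (z - μ jm)) ^ β := by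
          apply mul_le_mul (hcle jm) (Real.rpow_le_rpow (hSpos z).le hSle hβ0.le)
            (Real.rpow_nonneg (hSpos z).le β) (hw jm).le
      _ = w jm * Real.exp (-(β / 2) * quadForm Sig (z - μ jm)) := by rw [hrpow']
      _ ≤ T z := Finset.single_le_sum
          (f := fun i => w i * Real.exp (-(β / 2) * quadForm Sig (z - μ i)))
          (fun i _ => mul_nonneg (hw i).le (Real.exp_pos _).le) (Finset.mem_univ jm)
  -- density ratios
  have hSratio : pstar y / pstar x = S y ^ β / S x ^ β := by
    have hexp : ∀ z, Real.exp (-β * mixPotential Sig μ w z) = S z ^ β := by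
      intro z
      rw [show mixPotential Sig μ w z = -Real.log (S z) from rfl,
        Real.rpow_def_of_pos (hSpos z)]
      congr 1
      ring
    rw [hpstar, hpstar, div_div_div_cancel_right₀ hZspos.ne', hexp, hexp]
  have hTratio : ptilde y / ptilde x = T y / T x := by
    rw [hptilde, hptilde, div_div_div_cancel_right₀ hZtpos.ne']
  -- main ratio inequality
  have hSxpow : (0:ℝ) < S x ^ β := Real.rpow_pos_of_pos (hSpos x) β
  have hratio : T y / T x ≤ (1 / c ^ 2) * (S y ^ β / S x ^ β) := by
    calc T y / T x ≤ (S y ^ β / c) / (c * S x ^ β) :=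
          div_le_div₀ (div_nonneg (Real.rpow_nonneg (hSpos y).le β) hcpos.le)
            (hupper y) (mul_pos hcpos hSxpow) (hlower x)
      _ = (1 / c ^ 2) * (S y ^ β / S x ^ β) := by
          rw [div_div, one_div, inv_mul_eq_div, div_div]
          congr 1
          ring
  -- conclude with min
  rw [hSratio, hTratio]
  have hc2 : (1:ℝ) ≤ 1 / c ^ 2 := by
    rw [le_div_iff₀ (by positivity : (0:ℝ) < c ^ 2), one_mul]
    nlinarith
  have hmin : min 1 (T y / T x) ≤ (1 / c ^ 2) * min 1 (S y ^ β / S x ^ β) := by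
    rcases le_total (S y ^ β / S x ^ β) 1 with h | h
    · rw [min_eq_right h]
      exact le_trans (min_le_right _ _) hratio
    · rw [min_eq_left h]
      rw [mul_one]
      exact le_trans (min_le_left _ _) hc2
  calc propDens d η x y * min 1 (T y / T x)
      ≤ propDens d η x y * ((1 / c ^ 2) * min 1 (S y ^ β / S x ^ β)) := by
        apply mul_le_mul_of_nonneg_left hmin
        unfold propDens
        positivity
    _ = (1 / c ^ 2) * (propDens d η x y * min 1 (S y ^ β / S x ^ β)) := by ring
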